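/- Let g : [0,∞) → [0,∞) be a strictly convex, continuous function with g(0) = g'(0) = 0, g''(0) ∈ (0,∞), and lim_{t→∞} g(t)/t = ∞. If a centered random variable ξ satisfies P(|ξ| > t) ≤ exp(-g(t)) for all t ≥ 0, then there exists a constant C₁ ∈ (0,∞) such that for all λ ∈ ℝ, E exp(λξ) ≤ exp(g*(C₁ λ)), where g*(λ) = sup_{t ≥ 0} (|λ| t − g(t)) is the Young–Fenchel (Legendre) transform of g. -/

import Mathlib

open MeasureTheory ProbabilityTheory Real Set Filter

/-- Young–Fenchel (Legendre) transform `g*(λ) = sup_{t ≥ 0} (|λ| t − g t)`. -/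
noncomputable def youngFenchel (g : ℝ → ℝ) (l : ℝ) : ℝ :=
  ⨆ t : {t : ℝ // 0 ≤ t}, (|l| * t.1 - g t.1)

lemma aux_exp_ineq (x : ℝ) : Real.exp x ≤ 1 + x + x^2 * Real.exp |x| := by
  have hE1 : (1:ℝ) ≤ Real.exp |x| := Real.one_le_exp (abs_nonneg x)
  rcases le_or_gt |x| 1 with hx1 | hx1
  · have h := Real.abs_exp_sub_one_sub_id_le hx1
    have h2 : Real.exp x - 1 - x ≤ x^2 := (abs_le.mp h).2
    nlinarith [sq_nonneg x]
  · rcases le_or_gt 0 x with hx | hx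
    · rw [abs_of_nonneg hx]
      have h1 : -x + 1 ≤ Real.exp (-x) := Real.add_one_le_exp (-x)
      have h4 : (0:ℝ) < Real.exp x := Real.exp_pos x
      have e0 : (-x + 1) * Real.exp x ≤ Real.exp (-x) * Real.exp x :=
        mul_le_mul_of_nonneg_right h1 h4.le
      have h2 : Real.exp (-x) * Real.exp x = 1 := by rw [← Real.exp_add]; simp
      have e1 : Real.exp x - 1 ≤ x * Real.exp x := by nlinarith
      have e2 : x * (Real.exp x - 1) ≤ x * (x * Real.exp x) :=
        mul_le_mul_of_nonneg_left e1 (by positivity)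
      nlinarith
    · rw [abs_of_neg hx]
      have hx' : x ≤ -1 := by
        rw [abs_of_neg hx] at hx1; linarith
      have h1 : -x + 1 ≤ Real.exp (-x) := Real.add_one_le_exp (-x)
      have hle1 : Real.exp x ≤ 1 := Real.exp_le_one_iff.mpr hx.le
      have p1 : x^2 * (-x + 1) ≤ x^2 * Real.exp (-x) :=
        mul_le_mul_of_nonneg_left h1 (sq_nonneg x)
      have p2 : -x ≤ x^2 := by nlinarith
      have p3 : (-x) * (-x + 1) ≤ x^2 * (-x + 1) :=
        mul_le_mul_of_nonneg_right p2 (by linarith)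
      nlinarith

lemma aux_sq_le (y : ℝ) (hy : 0 ≤ y) : y^2 ≤ 4 * Real.exp y := by
  have h1 : y/2 + 1 ≤ Real.exp (y/2) := Real.add_one_le_exp (y/2)
  have h2 : Real.exp (y/2) * Real.exp (y/2) = Real.exp y := by
    rw [← Real.exp_add]; ring_nf
  have h3 : (0:ℝ) < Real.exp (y/2) := Real.exp_pos _
  nlinarith

lemma aux_int_exp (b : ℝ) (hb : 0 < b) :
    ∫ x in Ioi (0:ℝ), Real.exp (-(b*x)) = 1/b := by
  have key := integral_Ioi_of_hasDerivAt_of_tendsto' (f := fun x => -(Real.exp (-(b*x))/b))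
    (f' := fun x => Real.exp (-(b*x))) (a := 0) (m := 0)
    (fun x _ => by
      have h2 := ((((hasDerivAt_id x).const_mul b).neg.exp).div_const b).neg
      have heq : -(Real.exp (-(b*x)) * -(b*1) / b) = Real.exp (-(b*x)) := by
        field_simp
      simp only [id_eq] at h2
      rw [← heq]
      exact h2)
    (by simpa [neg_mul] using exp_neg_integrableOn_Ioi 0 hb)
    (by
      have h : Tendsto (fun x : ℝ => -(Real.exp (-(b*x))/b)) atTop (nhds (-(0/b))) := by
        refine Tendsto.neg (Tendsto.div_const ?_ _)
        exact Real.tendsto_exp_atBot.comp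
          ((tendsto_id.const_mul_atTop_of_neg (neg_neg_iff_pos.2 hb)).congr
            (fun x => by simp [neg_mul]))
      simpa using h)
  rw [key]; simp [hb.ne']

lemma yf_bdd {g : ℝ → ℝ} (hnonneg : ∀ t : ℝ, 0 ≤ t → 0 ≤ g t)
    (hsuper : Tendsto (fun t => g t / t) atTop atTop) (l : ℝ) :
    BddAbove (Set.range fun t : {t : ℝ // 0 ≤ t} => |l| * t.1 - g t.1) := by
  obtain ⟨T0, hT0⟩ := eventually_atTop.mp (hsuper.eventually_ge_atTop |l|)
  set T := max T0 1 with hT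
  refine ⟨|l| * T, ?_⟩
  rintro y ⟨⟨t, ht⟩, rfl⟩
  simp only
  have hT1 : (1:ℝ) ≤ T := le_max_right _ _
  rcases le_or_gt t T with h | h
  · have : |l| * t ≤ |l| * T := mul_le_mul_of_nonneg_left h (abs_nonneg l)
    have := hnonneg t ht
    linarith
  · have ht0 : (0:ℝ) < t := lt_of_lt_of_le (by linarith) h.le
    have := hT0 t (le_trans (le_max_left _ _) h.le)
    have hgt : |l| * t ≤ g t := by
      rw [le_div_iff₀ ht0] at this; linarith
    have : (0:ℝ) ≤ |l| * T := mul_nonneg (abs_nonneg l) (by linarith)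
    linarith

lemma yf_ge {g : ℝ → ℝ} (hnonneg : ∀ t : ℝ, 0 ≤ t → 0 ≤ g t)
    (hsuper : Tendsto (fun t => g t / t) atTop atTop) (l t : ℝ) (ht : 0 ≤ t) :
    |l| * t - g t ≤ youngFenchel g l :=
  le_ciSup (yf_bdd hnonneg hsuper l) ⟨t, ht⟩

lemma quad_bound {g : ℝ → ℝ} (hcont : ContinuousOn g (Set.Ici (0:ℝ)))
    (hg0 : g 0 = 0) (hg'0 : deriv g 0 = 0) (hb : 0 < deriv (deriv g) 0) :
    ∃ δ : ℝ, 0 < δ ∧ ∀ t : ℝ, 0 ≤ t → t ≤ δ → g t ≤ 2 * deriv (deriv g) 0 * t^2 := by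
  set b := deriv (deriv g) 0 with hbdef
  have hdiff : DifferentiableAt ℝ (deriv g) 0 := by
    by_contra h
    rw [hbdef, deriv_zero_of_not_differentiableAt h] at hb; exact lt_irrefl 0 hb
  have hd : HasDerivAt (deriv g) b 0 := hdiff.hasDerivAt
  rw [hasDerivAt_iff_tendsto_slope] at hd
  have hmem : Ioo (b/2) (2*b) ∈ nhds b := Ioo_mem_nhds (by linarith) (by linarith)
  have hev : ∀ᶠ x in nhdsWithin 0 {(0:ℝ)}ᶜ, slope (deriv g) 0 x ∈ Ioo (b/2) (2*b) :=
    hd.eventually_mem hmem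
  have hev2 : ∀ᶠ x in nhdsWithin 0 (Ioi (0:ℝ)), slope (deriv g) 0 x ∈ Ioo (b/2) (2*b) :=
    hev.filter_mono (nhdsWithin_mono 0 (fun x hx => ne_of_gt hx))
  obtain ⟨ε, hε, hball⟩ := mem_nhdsGT_iff_exists_Ioc_subset.mp hev2
  have hε0 : (0:ℝ) < ε := hε
  refine ⟨ε, hε0, ?_⟩
  have hder : ∀ x : ℝ, 0 < x → x ≤ ε → b/2 * x < deriv g x ∧ deriv g x < 2*b*x := by
    intro x hx hxε
    have := hball ⟨hx, hxε⟩
    rw [mem_setOf_eq, slope_def_field, hg'0, sub_zero, sub_zero] at this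
    obtain ⟨h1, h2⟩ := this
    constructor
    · calc b/2 * x < (deriv g x / x) * x := by
            exact mul_lt_mul_of_pos_right h1 hx
        _ = deriv g x := by field_simp
    · calc deriv g x = (deriv g x / x) * x := by field_simp
        _ < 2*b*x := mul_lt_mul_of_pos_right h2 hx
  intro t ht htδ
  rcases eq_or_lt_of_le ht with rfl | ht0
  · simp [hg0]
  · have hdiffOn : DifferentiableOn ℝ g (Ioo 0 t) := by
      intro x hx
      have hx1 : (0:ℝ) < x := hx.1
      have hx2 : x ≤ ε := le_trans hx.2.le htδ
      have h1 := (hder x hx1 hx2).1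
      have hpos : 0 < deriv g x := lt_of_le_of_lt (by positivity) h1
      exact (differentiableAt_of_deriv_ne_zero hpos.ne').differentiableWithinAt
    have hcont' : ContinuousOn g (Icc 0 t) := hcont.mono (fun x hx => hx.1)
    obtain ⟨c, hc, hslope⟩ := exists_deriv_eq_slope g ht0 hcont' hdiffOn
    have hc1 : (0:ℝ) < c := hc.1
    have hc2 : c ≤ ε := le_trans hc.2.le htδ
    have h2 := (hder c hc1 hc2).2
    have : g t = deriv g c * t := by
      rw [hslope, hg0, sub_zero, sub_zero]; field_simp
    rw [this]
    calc deriv g c * t ≤ (2*b*c) * t := mul_le_mul_of_nonneg_right h2.le ht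
      _ ≤ 2*b*t*t := by
          nlinarith [mul_nonneg (mul_nonneg hb.le (sub_nonneg.mpr hc.2.le)) ht0.le]
      _ = 2*b*t^2 := by ring

lemma exists_dom {g : ℝ → ℝ} (hnonneg : ∀ t : ℝ, 0 ≤ t → 0 ≤ g t)
    (hsuper : Tendsto (fun t => g t / t) atTop atTop) (c : ℝ) (hc : 0 < c) :
    ∃ A : ℝ, 0 ≤ A ∧ ∀ t : ℝ, 0 ≤ t →
      Real.exp (c*t) * c * Real.exp (-g t) ≤ A * Real.exp (-(1*t)) := by
  obtain ⟨T0, hT0⟩ := eventually_atTop.mp (hsuper.eventually_ge_atTop (c+1))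
  set T := max T0 0 with hTdef
  have hT : (0:ℝ) ≤ T := le_max_right _ _
  refine ⟨c * Real.exp ((c+1)*T), by positivity, ?_⟩
  intro t ht
  have key : c * t - g t ≤ (c+1)*T - t := by
    rcases le_or_gt t T with h | h
    · have := hnonneg t ht
      nlinarith
    · have h0 : (0:ℝ) < t := lt_of_le_of_lt hT h
      have := hT0 t (le_trans (le_max_left _ _) h.le)
      rw [le_div_iff₀ h0] at this
      nlinarith
  calc Real.exp (c*t) * c * Real.exp (-g t) = c * Real.exp (c*t - g t) := by
        rw [sub_eq_add_neg, Real.exp_add]; ring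
    _ ≤ c * Real.exp ((c+1)*T - t) :=
        mul_le_mul_of_nonneg_left (Real.exp_le_exp.mpr key) hc.le
    _ = c * Real.exp ((c+1)*T) * Real.exp (-(1*t)) := by
        rw [sub_eq_add_neg, Real.exp_add, one_mul]; ring

set_option maxHeartbeats 2000000

lemma tail_exp_bound {Ω : Type*} [MeasurableSpace Ω] (μ : Measure Ω) [IsProbabilityMeasure μ]
    (g : ℝ → ℝ) (ξ : Ω → ℝ) (hmeas : Measurable ξ)
    (htail : ∀ t : ℝ, 0 ≤ t → μ {ω | t < |ξ ω|} ≤ ENNReal.ofReal (Real.exp (-g t)))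
    (c : ℝ) (hc : 0 < c) (A b : ℝ) (hA : 0 ≤ A) (hb : 0 < b)
    (hpt : ∀ t : ℝ, 0 ≤ t → Real.exp (c*t) * c * Real.exp (-g t) ≤ A * Real.exp (-(b*t))) :
    Integrable (fun ω => Real.exp (c * |ξ ω|)) μ ∧
      ∫ ω, Real.exp (c * |ξ ω|) ∂μ ≤ 1 + A / b := by
  set f : Ω → ℝ := fun ω => Real.exp (c * |ξ ω|) with hf
  have hfmeas : Measurable f := measurable_exp.comp (hmeas.abs.const_mul c)
  have hf1 : ∀ ω, 1 ≤ f ω := fun ω => Real.one_le_exp (by positivity)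
  have hwcont : Continuous (fun t : ℝ => Real.exp (c*t) * c) :=
    (Real.continuous_exp.comp (continuous_const.mul continuous_id)).mul continuous_const
  have key := lintegral_comp_eq_lintegral_meas_lt_mul μ
    (f := fun ω => |ξ ω|) (g := fun t => Real.exp (c*t) * c)
    (Eventually.of_forall (fun ω => abs_nonneg (ξ ω)))
    hmeas.abs.aemeasurable
    (fun t _ => hwcont.intervalIntegrable 0 t)
    (Eventually.of_forall (fun t => by positivity))
  have hinner : ∀ x : ℝ, ∫ t in (0:ℝ)..x, Real.exp (c*t) * c = Real.exp (c*x) - 1 := by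
    intro x
    have := intervalIntegral.integral_eq_sub_of_hasDerivAt
      (f := fun t => Real.exp (c*t)) (f' := fun t => Real.exp (c*t) * c) (a := 0) (b := x)
      (fun t _ => by
        have h := ((hasDerivAt_id t).const_mul c).exp
        simpa using h)
      ((hwcont.intervalIntegrable 0 x))
    simpa using this
  simp_rw [hinner] at key
  have step3 : ∫⁻ t in Ioi (0:ℝ), μ {a | t < |ξ a|} * ENNReal.ofReal (Real.exp (c*t) * c)
      ≤ ∫⁻ t in Ioi (0:ℝ), ENNReal.ofReal (A * Real.exp (-(b*t))) := by
    apply setLIntegral_mono' measurableSet_Ioi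
    intro t ht
    calc μ {a | t < |ξ a|} * ENNReal.ofReal (Real.exp (c*t) * c)
        ≤ ENNReal.ofReal (Real.exp (-g t)) * ENNReal.ofReal (Real.exp (c*t) * c) :=
          mul_le_mul_left (htail t (le_of_lt ht)) _
      _ = ENNReal.ofReal (Real.exp (c*t) * c * Real.exp (-g t)) := by
          rw [← ENNReal.ofReal_mul (Real.exp_nonneg _), mul_comm]
      _ ≤ ENNReal.ofReal (A * Real.exp (-(b*t))) :=
          ENNReal.ofReal_le_ofReal (hpt t (le_of_lt ht))
  have hintA : IntegrableOn (fun t : ℝ => A * Real.exp (-(b*t))) (Ioi 0) := by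
    have := (exp_neg_integrableOn_Ioi 0 hb).const_mul A
    simpa [neg_mul, IntegrableOn] using this
  have step4 : ∫⁻ t in Ioi (0:ℝ), ENNReal.ofReal (A * Real.exp (-(b*t)))
      = ENNReal.ofReal (A / b) := by
    rw [← ofReal_integral_eq_lintegral_ofReal hintA
      (Eventually.of_forall (fun t => by positivity))]
    rw [integral_const_mul, aux_int_exp b hb]
    ring_nf
  have main : ∫⁻ ω, ENNReal.ofReal (f ω - 1) ∂μ ≤ ENNReal.ofReal (A / b) := by
    rw [hf]; rw [key]; exact le_trans step3 (le_of_eq step4)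
  have hsplit : ∀ ω, ENNReal.ofReal (f ω) = ENNReal.ofReal (f ω - 1) + 1 := by
    intro ω
    rw [← ENNReal.ofReal_one, ← ENNReal.ofReal_add (by linarith [hf1 ω]) zero_le_one]
    norm_num
  have hfin : ∫⁻ ω, ENNReal.ofReal (f ω) ∂μ < ⊤ := by
    calc ∫⁻ ω, ENNReal.ofReal (f ω) ∂μ
        = ∫⁻ ω, (ENNReal.ofReal (f ω - 1) + 1) ∂μ := lintegral_congr (fun ω => hsplit ω)
      _ = (∫⁻ ω, ENNReal.ofReal (f ω - 1) ∂μ) + 1 := by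
          rw [lintegral_add_right _ measurable_const, lintegral_const, measure_univ, mul_one]
      _ ≤ ENNReal.ofReal (A / b) + 1 := add_le_add_left main _
      _ < ⊤ := by finiteness
  have hint_f : Integrable f μ := by
    refine ⟨hfmeas.aestronglyMeasurable, ?_⟩
    rw [hasFiniteIntegral_iff_ofReal (Eventually.of_forall (fun ω => by positivity))]
    exact hfin
  refine ⟨hint_f, ?_⟩
  have hsub : ∫ ω, (f ω - 1) ∂μ = (∫ ω, f ω ∂μ) - 1 := by
    rw [integral_sub hint_f (integrable_const 1), integral_const]
    simp
  have hsub_le : ∫ ω, (f ω - 1) ∂μ ≤ A / b := by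
    rw [integral_eq_lintegral_of_nonneg_ae (Eventually.of_forall (fun ω => sub_nonneg.mpr (hf1 ω)))
      ((hfmeas.sub measurable_const).aestronglyMeasurable)]
    calc (∫⁻ ω, ENNReal.ofReal (f ω - 1) ∂μ).toReal
        ≤ (ENNReal.ofReal (A / b)).toReal :=
          ENNReal.toReal_mono ENNReal.ofReal_ne_top main
      _ = A / b := ENNReal.toReal_ofReal (by positivity)
  linarith

/-- If a centered r.v. `ξ` has tail `P(|ξ| > t) ≤ exp(-g t)` for a strictly convex,
continuous `g ≥ 0` with `g 0 = g' 0 = 0`, `g'' 0 ∈ (0,∞)`, `g t / t → ∞`, then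
`E exp(λ ξ) ≤ exp (g* (C₁ λ))` for some constant `C₁ ∈ (0,∞)` and all `λ ∈ ℝ`. -/
theorem mgf_bound_of_tail
    {Ω : Type*} [MeasurableSpace Ω] (μ : Measure Ω) [IsProbabilityMeasure μ]
    (g : ℝ → ℝ)
    (hconv : StrictConvexOn ℝ (Set.Ici (0 : ℝ)) g)
    (hcont : ContinuousOn g (Set.Ici (0 : ℝ)))
    (hnonneg : ∀ t : ℝ, 0 ≤ t → 0 ≤ g t)
    (hg0 : g 0 = 0) (hg'0 : deriv g 0 = 0)
    (hg''0 : 0 < deriv (deriv g) 0)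
    (hsuper : Tendsto (fun t => g t / t) atTop atTop)
    (ξ : Ω → ℝ) (hmeas : Measurable ξ)
    (hint : Integrable ξ μ) (hcent : (∫ ω, ξ ω ∂μ) = 0)
    (htail : ∀ t : ℝ, 0 ≤ t → μ {ω | t < |ξ ω|} ≤ ENNReal.ofReal (Real.exp (-g t))) :
    ∃ C₁ : ℝ, 0 < C₁ ∧
      ∀ l : ℝ, (∫ ω, Real.exp (l * ξ ω) ∂μ) ≤ Real.exp (youngFenchel g (C₁ * l)) := by
  obtain ⟨δ, hδ, hquad⟩ := quad_bound hcont hg0 hg'0 hg''0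
  set b := deriv (deriv g) 0 with hbdef
  have hb : 0 < b := hg''0
  -- integrability of exp (2 |ξ|)
  obtain ⟨A2, hA2, hpt2⟩ := exists_dom hnonneg hsuper 2 (by norm_num)
  obtain ⟨hint2, -⟩ := tail_exp_bound μ g ξ hmeas htail 2 (by norm_num) A2 1 hA2 one_pos hpt2
  have hMint : Integrable (fun ω => ξ ω^2 * Real.exp |ξ ω|) μ := by
    refine Integrable.mono' (hint2.const_mul 4) ?_ ?_
    · exact ((hmeas.pow_const 2).mul (measurable_exp.comp hmeas.abs)).aestronglyMeasurable
    · refine Eventually.of_forall (fun ω => ?_)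
      have h1 : ξ ω^2 ≤ 4 * Real.exp |ξ ω| := by
        have := aux_sq_le |ξ ω| (abs_nonneg _)
        simpa [sq_abs] using this
      rw [Real.norm_eq_abs, abs_of_nonneg (by positivity)]
      calc ξ ω^2 * Real.exp |ξ ω| ≤ (4 * Real.exp |ξ ω|) * Real.exp |ξ ω| :=
            mul_le_mul_of_nonneg_right h1 (Real.exp_nonneg _)
        _ = 4 * Real.exp (2 * |ξ ω|) := by rw [mul_assoc, ← Real.exp_add]; ring_nf
  set M := ∫ ω, ξ ω^2 * Real.exp |ξ ω| ∂μ with hMdef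
  have hM0 : 0 ≤ M := integral_nonneg (fun ω => by positivity)
  set C₁ : ℝ := 3 + 8*b + 8*b*M + 2*M/δ + 2*b*δ + 1/δ with hC
  have haux1 : (0:ℝ) ≤ 2*M/δ := by positivity
  have haux2 : (0:ℝ) < 1/δ := by positivity
  have haux3 : (0:ℝ) ≤ 8*b*M := by positivity
  have hC3 : 3 ≤ C₁ := by rw [hC]; nlinarith
  have hC1 : 0 < C₁ := by linarith
  refine ⟨C₁, hC1, ?_⟩
  intro l
  have habs : |C₁ * l| = C₁ * |l| := by rw [abs_mul, abs_of_pos hC1]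
  set G := youngFenchel g (C₁ * l) with hGdef
  have hGge : ∀ s : ℝ, 0 ≤ s → C₁ * |l| * s - g s ≤ G := by
    intro s hs
    have := yf_ge hnonneg hsuper (C₁ * l) s hs
    rwa [habs] at this
  have hG0 : 0 ≤ G := by
    have := hGge 0 le_rfl
    simp [hg0] at this
    linarith
  -- key Young-Fenchel lower bounds
  have hCd : C₁ ≥ 2*b*δ + 1/δ := by rw [hC]; linarith
  have hC2M : C₁ ≥ 2*M/δ := by rw [hC]; nlinarith
  have hC8 : 8*b*M ≤ C₁ := by rw [hC]; nlinarith
  have hC8bM : C₁^2 ≥ 8*b*M := by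
    nlinarith [mul_nonneg (sub_nonneg.mpr hC8) (show (0:ℝ) ≤ C₁ - 1 by linarith)]
  clear_value b M C₁ G
  rcases le_or_gt |l| 1 with hl | hl
  · -- small |l|
    have hptw : ∀ ω, Real.exp (l * ξ ω) ≤ 1 + l * ξ ω + l^2 * (ξ ω^2 * Real.exp |ξ ω|) := by
      intro ω
      have h := aux_exp_ineq (l * ξ ω)
      have h2 : Real.exp |l * ξ ω| ≤ Real.exp |ξ ω| := by
        apply Real.exp_le_exp.mpr
        rw [abs_mul]
        calc |l| * |ξ ω| ≤ 1 * |ξ ω| := mul_le_mul_of_nonneg_right hl (abs_nonneg _)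
          _ = |ξ ω| := one_mul _
      have h3 : (l * ξ ω)^2 * Real.exp |l * ξ ω| ≤ (l * ξ ω)^2 * Real.exp |ξ ω| :=
        mul_le_mul_of_nonneg_left h2 (sq_nonneg _)
      have h4 : (l * ξ ω)^2 * Real.exp |ξ ω| = l^2 * (ξ ω^2 * Real.exp |ξ ω|) := by ring
      calc Real.exp (l * ξ ω) ≤ 1 + l * ξ ω + (l * ξ ω)^2 * Real.exp |l * ξ ω| := h
        _ ≤ 1 + l * ξ ω + l^2 * (ξ ω^2 * Real.exp |ξ ω|) := by rw [← h4]; linarith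
    have hintRHS : Integrable (fun ω => 1 + l * ξ ω + l^2 * (ξ ω^2 * Real.exp |ξ ω|)) μ :=
      ((integrable_const 1).add (hint.const_mul l)).add (hMint.const_mul (l^2))
    have hIle : ∫ ω, Real.exp (l * ξ ω) ∂μ ≤ 1 + l^2 * M := by
      calc ∫ ω, Real.exp (l * ξ ω) ∂μ
          ≤ ∫ ω, (1 + l * ξ ω + l^2 * (ξ ω^2 * Real.exp |ξ ω|)) ∂μ :=
            integral_mono_of_nonneg (Eventually.of_forall fun ω => (Real.exp_pos _).le)
              hintRHS (Eventually.of_forall hptw)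
        _ = 1 + l^2 * M := by
            have e1 : ∫ ω, (1 + l * ξ ω + l^2 * (ξ ω^2 * Real.exp |ξ ω|)) ∂μ
                = (∫ ω, (1 + l * ξ ω) ∂μ) + ∫ ω, l^2 * (ξ ω^2 * Real.exp |ξ ω|) ∂μ :=
              integral_add ((integrable_const 1).add (hint.const_mul l)) (hMint.const_mul _)
            have e2 : ∫ ω, (1 + l * ξ ω) ∂μ = (∫ ω, (1:ℝ) ∂μ) + ∫ ω, l * ξ ω ∂μ :=
              integral_add (integrable_const 1) (hint.const_mul l)
            rw [e1, e2, integral_const_mul, integral_const_mul, hcent, integral_const]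
            simp [hMdef]
    have hGq : l^2 * M ≤ G := by
      have hsql : |l|^2 = l^2 := sq_abs l
      rcases le_or_gt (C₁ * |l|) (4*b*δ) with hcase | hcase
      · have hs0 : (0:ℝ) ≤ C₁*|l| / (4*b) := by positivity
        have hsδ : C₁*|l| / (4*b) ≤ δ := by
          rw [div_le_iff₀ (by positivity)]
          nlinarith
        have h := hGge (C₁*|l| / (4*b)) hs0
        have hq := hquad _ hs0 hsδ
        have e1 : C₁ * |l| * (C₁*|l| / (4*b)) - 2*b*(C₁*|l| / (4*b))^2
            = C₁^2 * |l|^2 / (8*b) := by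
          field_simp
          ring
        have hlow : C₁^2 * |l|^2 / (8*b) ≤ G := by
          rw [← e1]
          linarith
        rw [hsql] at hlow
        -- C₁^2 ≥ 8 b M ⟹ C₁² l² /(8b) ≥ M l²
        have : M * l^2 ≤ C₁^2 * l^2 / (8*b) := by
          rw [le_div_iff₀ (by positivity)]
          nlinarith [sq_nonneg l, mul_nonneg (sq_nonneg l) (sub_nonneg.mpr hC8bM)]
        linarith
      · have h := hGge δ hδ.le
        have hq := hquad δ hδ.le le_rfl
        have h1 : 2*b*δ^2 ≤ C₁*|l| * δ/2 := by nlinarith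
        have h2 : C₁*|l| * δ/2 - M * l^2 ≥ 0 := by
          have hMl : M * |l| ≤ C₁ * δ / 2 := by
            calc M * |l| ≤ M * 1 := mul_le_mul_of_nonneg_left hl hM0
              _ = M := mul_one M
              _ ≤ C₁ * δ / 2 := by
                  rw [ge_iff_le, div_le_iff₀ hδ] at hC2M
                  linarith
          have : M * l^2 ≤ (C₁ * δ / 2) * |l| := by
            calc M * l^2 = (M * |l|) * |l| := by rw [← hsql]; ring
              _ ≤ (C₁ * δ / 2) * |l| := mul_le_mul_of_nonneg_right hMl (abs_nonneg l)
          nlinarith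
        nlinarith
    calc ∫ ω, Real.exp (l * ξ ω) ∂μ ≤ 1 + l^2 * M := hIle
      _ ≤ Real.exp (l^2 * M) := by
          have := Real.add_one_le_exp (l^2 * M)
          linarith
      _ ≤ Real.exp G := Real.exp_le_exp.mpr hGq
  · -- large |l|
    have hlpos : (0:ℝ) < |l| := lt_trans one_pos hl
    have hC1' : (0:ℝ) < C₁ - 1 := by linarith
    have hptl : ∀ t : ℝ, 0 ≤ t →
        Real.exp (|l| * t) * |l| * Real.exp (-g t)
          ≤ (|l| * Real.exp G) * Real.exp (-((C₁-1)*|l| * t)) := by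
      intro t ht
      have h := hGge t ht
      have e : (C₁-1)*|l| * t = C₁ * |l| * t - |l| * t := by ring
      have key : |l| * t + -g t ≤ G + -((C₁-1)*|l| * t) := by rw [e]; linarith
      calc Real.exp (|l| * t) * |l| * Real.exp (-g t)
          = |l| * Real.exp (|l| * t + -g t) := by rw [Real.exp_add]; ring
        _ ≤ |l| * Real.exp (G + -((C₁-1)*|l| * t)) :=
            mul_le_mul_of_nonneg_left (Real.exp_le_exp.mpr key) (abs_nonneg l)
        _ = (|l| * Real.exp G) * Real.exp (-((C₁-1)*|l| * t)) := by
            rw [Real.exp_add]; ring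
    obtain ⟨hintc, hIc⟩ := tail_exp_bound μ g ξ hmeas htail |l| hlpos
      (|l| * Real.exp G) ((C₁-1)*|l|) (by positivity) (by positivity) hptl
    have hIle : ∫ ω, Real.exp (l * ξ ω) ∂μ ≤ ∫ ω, Real.exp (|l| * |ξ ω|) ∂μ := by
      refine integral_mono_of_nonneg (Eventually.of_forall fun ω => (Real.exp_pos _).le)
        hintc (Eventually.of_forall fun ω => ?_)
      apply Real.exp_le_exp.mpr
      calc l * ξ ω ≤ |l * ξ ω| := le_abs_self _
        _ = |l| * |ξ ω| := abs_mul l (ξ ω)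
    have hdiv : |l| * Real.exp G / ((C₁-1)*|l|) = Real.exp G / (C₁-1) := by
      field_simp
    have hGlog : Real.log 2 ≤ G := by
      have h := hGge δ hδ.le
      have hq := hquad δ hδ.le le_rfl
      have hlog : Real.log 2 ≤ 1 := by
        have := Real.log_le_sub_one_of_pos (show (0:ℝ) < 2 by norm_num)
        linarith
      have hCδ : 2*b*δ^2 + 1 ≤ C₁ * δ := by
        have e : (2*b*δ + 1/δ) * δ = 2*b*δ^2 + 1 := by field_simp
        calc 2*b*δ^2 + 1 = (2*b*δ + 1/δ) * δ := e.symm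
          _ ≤ C₁ * δ := mul_le_mul_of_nonneg_right hCd hδ.le
      have h2 : C₁ * δ ≤ C₁ * |l| * δ := by
        nlinarith [mul_nonneg (mul_nonneg hC1.le hδ.le) (sub_nonneg.mpr hl.le)]
      nlinarith
    have h2G : (2:ℝ) ≤ Real.exp G := by
      calc (2:ℝ) = Real.exp (Real.log 2) := (Real.exp_log (by norm_num)).symm
        _ ≤ Real.exp G := Real.exp_le_exp.mpr hGlog
    have hfrac : Real.exp G / (C₁ - 1) ≤ Real.exp G / 2 :=
      div_le_div_of_nonneg_left (Real.exp_pos G).le (by norm_num) (by linarith)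
    calc ∫ ω, Real.exp (l * ξ ω) ∂μ
        ≤ ∫ ω, Real.exp (|l| * |ξ ω|) ∂μ := hIle
      _ ≤ 1 + |l| * Real.exp G / ((C₁-1)*|l|) := hIc
      _ = 1 + Real.exp G / (C₁-1) := by rw [hdiv]
      _ ≤ 1 + Real.exp G / 2 := by linarith
      _ ≤ Real.exp G := by linarith
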